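/- For every p with 0 < p < 1 there exists a constant c(p) depending only on p such that for every positive integer n, the total variation distance between the binomial distributions with parameters (n, p) and (n+1, p) satisfies ρ_TV(B_{n,p}, B_{n+1,p}) ≤ c(p)/√n. -/

import Mathlib

open MeasureTheory ProbabilityTheory

/-- n-fold convolution power of a measure on ℝ (0-th power is the Dirac measure at 0). -/
noncomputable def convPow1 (F : Measure ℝ) : ℕ → Measure ℝ
  | 0 => Measure.dirac 0
  | (n + 1) => (convPow1 F n).conv F

/-- Kolmogorov (uniform) distance between measures on ℝ -/
noncomputable def kolm (F G : Measure ℝ) : ℝ :=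
  ⨆ x : ℝ, |(F (Set.Iic x)).toReal - (G (Set.Iic x)).toReal|

/-- the binomial distribution with parameters n, p, as a measure on ℝ -/
noncomputable def binom (n : ℕ) (p : ℝ) : Measure ℝ :=
  ∑ k ∈ Finset.range (n + 1),
    (ENNReal.ofReal ((n.choose k : ℝ) * p ^ k * (1 - p) ^ (n - k))) • Measure.dirac (k : ℝ)

/-- total variation distance between measures on ℝ -/
noncomputable def rhoTV1 (F G : Measure ℝ) : ℝ :=
  ⨆ A : {A : Set ℝ // MeasurableSet A}, |(F A.1).toReal - (G A.1).toReal|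

open Real Stirling Nat

noncomputable def bpmf (n k : ℕ) (p : ℝ) : ℝ := (n.choose k : ℝ) * p ^ k * (1 - p) ^ (n - k)

section PMF
variable {p : ℝ} {n k : ℕ}

lemma bpmf_nonneg (hp0 : 0 ≤ p) (hp1 : p ≤ 1) : 0 ≤ bpmf n k p := by
  have h1 : (0:ℝ) ≤ 1 - p := by linarith
  exact mul_nonneg (mul_nonneg (Nat.cast_nonneg _) (pow_nonneg hp0 _)) (pow_nonneg h1 _)

lemma bpmf_top : bpmf n (n+1) p = 0 := by
  simp [bpmf, Nat.choose_eq_zero_of_lt (Nat.lt_succ_self n)]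

lemma sum_bpmf (n : ℕ) (p : ℝ) : ∑ k ∈ Finset.range (n+1), bpmf n k p = 1 := by
  have := add_pow p (1-p) n
  simp only [add_sub_cancel, one_pow] at this
  rw [show (1:ℝ) = (p + (1-p))^n by rw [add_sub_cancel, one_pow], add_pow]
  refine Finset.sum_congr rfl fun k hk => ?_
  unfold bpmf; ring

lemma bpmf_le_one (hp0 : 0 ≤ p) (hp1 : p ≤ 1) (hk : k ≤ n) : bpmf n k p ≤ 1 := by
  rw [← sum_bpmf n p]
  exact Finset.single_le_sum (f := fun i => bpmf n i p) (fun i _ => bpmf_nonneg hp0 hp1)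
    (Finset.mem_range.2 (Nat.lt_succ_of_le hk))

lemma bpmf_pascal (hk : k ≤ n) :
    bpmf (n+1) (k+1) p = (1-p) * bpmf n (k+1) p + p * bpmf n k p := by
  rcases Nat.lt_or_ge k n with h | h
  · have e1 : n - k = (n - (k+1)) + 1 := by omega
    have e2 : (n+1) - (k+1) = n - k := by omega
    have e3 : ((n+1).choose (k+1) : ℝ) = (n.choose k : ℝ) + (n.choose (k+1) : ℝ) := by
      push_cast [Nat.choose_succ_succ]; ring
    unfold bpmf
    rw [e2, e3, e1, pow_succ]
    ring
  · have hkn : k = n := le_antisymm hk h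
    subst hkn
    simp [bpmf, Nat.choose_eq_zero_of_lt (Nat.lt_succ_self k), Nat.choose_self, pow_succ]
    ring

lemma bpmf_pascal0 : bpmf (n+1) 0 p = (1-p) * bpmf n 0 p := by
  simp [bpmf]; ring

lemma bpmf_ratio (hk : k < n) (hq : 0 < 1 - p) :
    ((k:ℝ)+1) * (1-p) * bpmf n (k+1) p = ((n:ℝ) - k) * p * bpmf n k p := by
  have e1 : (n.choose (k+1) : ℝ) * ((k:ℝ)+1) = (n.choose k : ℝ) * ((n:ℝ) - k) := by
    have := Nat.choose_succ_right_eq n k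
    have := congrArg (Nat.cast : ℕ → ℝ) this
    push_cast at this
    rw [Nat.cast_sub hk.le] at this
    linarith [this]
  have e2 : n - k = (n - (k+1)) + 1 := by omega
  calc ((k:ℝ)+1) * (1-p) * bpmf n (k+1) p
      = ((n.choose (k+1) : ℝ) * ((k:ℝ)+1)) * p^(k+1) * ((1-p)^(n-(k+1)) * (1-p)) := by
        unfold bpmf; ring
    _ = ((n.choose k : ℝ) * ((n:ℝ)-k)) * p^(k+1) * (1-p)^(n-k) := by
        rw [e1, e2]; ring_nf
    _ = ((n:ℝ) - k) * p * bpmf n k p := by unfold bpmf; ring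

lemma bpmf_mono_up (hp0 : 0 < p) (hp1 : p < 1) (hk : k < n)
    (h : ((k:ℝ)+1) ≤ ((n:ℝ)+1) * p) : bpmf n k p ≤ bpmf n (k+1) p := by
  have hq : 0 < 1 - p := by linarith
  have hr := bpmf_ratio hk hq
  have hb := bpmf_nonneg (n := n) (k := k) (p := p) hp0.le hp1.le
  have hcond : ((k:ℝ)+1) * (1-p) ≤ ((n:ℝ) - k) * p := by
    have hkn : (k:ℝ) < n := by exact_mod_cast hk
    nlinarith
  have hpos : 0 < ((k:ℝ)+1) * (1-p) := by positivity
  nlinarith [mul_le_mul_of_nonneg_right hcond hb]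

lemma bpmf_mono_down (hp0 : 0 < p) (hp1 : p < 1)
    (h : ((n:ℝ)+1) * p ≤ ((k:ℝ)+1)) : bpmf n (k+1) p ≤ bpmf n k p := by
  have hq : 0 < 1 - p := by linarith
  rcases Nat.lt_or_ge k n with hk | hk
  · have hr := bpmf_ratio hk hq
    have hb := bpmf_nonneg (n := n) (k := k) (p := p) hp0.le hp1.le
    have hcond : ((n:ℝ) - k) * p ≤ ((k:ℝ)+1) * (1-p) := by
      have hkn : (k:ℝ) < n := by exact_mod_cast hk
      nlinarith
    have hpos : 0 < ((k:ℝ)+1) * (1-p) := by positivity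
    nlinarith [mul_le_mul_of_nonneg_right hcond hb]
  · have : bpmf n (k+1) p = 0 := by
      simp [bpmf, Nat.choose_eq_zero_of_lt (by omega : n < k+1)]
    rw [this]; exact bpmf_nonneg hp0.le hp1.le

end PMF

lemma tele (f : ℕ → ℝ) (N M : ℕ) (hM : M ≤ N) (hup : ∀ k < M, f k ≤ f (k+1))
    (hdown : ∀ k, M ≤ k → k < N → f (k+1) ≤ f k) :
    ∑ k ∈ Finset.range N, |f (k+1) - f k| = 2 * f M - f 0 - f N := by
  rw [← Finset.sum_range_add_sum_Ico _ hM]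
  have h1 : ∑ k ∈ Finset.range M, |f (k+1) - f k| = f M - f 0 := by
    rw [← Finset.sum_range_sub f M]
    exact Finset.sum_congr rfl fun k hk => abs_of_nonneg (by linarith [hup k (Finset.mem_range.1 hk)])
  have h2 : ∑ k ∈ Finset.Ico M N, |f (k+1) - f k| = f M - f N := by
    have : ∀ k ∈ Finset.Ico M N, |f (k+1) - f k| = f k - f (k+1) := fun k hk => by
      rw [Finset.mem_Ico] at hk
      rw [abs_sub_comm]
      exact abs_of_nonneg (by linarith [hdown k hk.1 hk.2])
    rw [Finset.sum_congr rfl this, Finset.sum_Ico_eq_sub _ hM,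
      Finset.sum_range_sub' f N, Finset.sum_range_sub' f M]
    ring
  rw [h1, h2]; ring

lemma stirl_ge {n : ℕ} (hn : 1 ≤ n) : Real.sqrt π ≤ stirlingSeq n := by
  obtain ⟨j, rfl⟩ := Nat.exists_eq_add_of_le hn
  have ht : Filter.Tendsto (stirlingSeq ∘ Nat.succ) Filter.atTop (nhds (Real.sqrt π)) :=
    tendsto_stirlingSeq_sqrt_pi.comp (Filter.tendsto_add_atTop_nat 1)
  have := stirlingSeq'_antitone.le_of_tendsto ht j
  simpa [Nat.add_comm, Nat.succ_eq_add_one] using this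

lemma stirl_le {n : ℕ} (hn : 1 ≤ n) : stirlingSeq n ≤ Real.exp 1 / Real.sqrt 2 := by
  obtain ⟨j, rfl⟩ := Nat.exists_eq_add_of_le hn
  have := stirlingSeq'_antitone (Nat.zero_le j)
  simpa [Nat.add_comm, stirlingSeq_one] using this

lemma fact_eq {n : ℕ} (hn : 1 ≤ n) :
    (n ! : ℝ) = stirlingSeq n * (Real.sqrt (2*n) * ((n:ℝ)/Real.exp 1)^n) := by
  have hpos : 0 < Real.sqrt (2*n) * ((n:ℝ)/Real.exp 1)^n := by
    have : (0:ℝ) < n := by exact_mod_cast hn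
    positivity
  rw [stirlingSeq, div_mul_cancel₀]
  exact hpos.ne'

lemma fact_lo {n : ℕ} (hn : 1 ≤ n) :
    Real.sqrt (2*n) * ((n:ℝ)/Real.exp 1)^n ≤ (n ! : ℝ) := by
  rw [fact_eq hn]
  have hpos : 0 < Real.sqrt (2*n) * ((n:ℝ)/Real.exp 1)^n := by
    have : (0:ℝ) < n := by exact_mod_cast hn
    positivity
  have h1 : (1:ℝ) ≤ Real.sqrt π := by
    rw [show (1:ℝ) = Real.sqrt 1 by simp]
    exact Real.sqrt_le_sqrt (by linarith [Real.pi_gt_three])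
  nlinarith [stirl_ge hn, h1, hpos]

lemma fact_hi {n : ℕ} (hn : 1 ≤ n) :
    (n ! : ℝ) ≤ (Real.exp 1 / Real.sqrt 2) * (Real.sqrt (2*n) * ((n:ℝ)/Real.exp 1)^n) := by
  rw [fact_eq hn]
  have hpos : 0 ≤ Real.sqrt (2*n) * ((n:ℝ)/Real.exp 1)^n := by
    have : (0:ℝ) < n := by exact_mod_cast hn
    positivity
  exact mul_le_mul_of_nonneg_right (stirl_le hn) hpos

lemma amgm {n m r : ℕ} {p : ℝ} (hm1 : 1 ≤ m) (hr1 : 1 ≤ r) (hmr : m + r = n)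
    (hp0 : 0 ≤ p) (hp1 : p ≤ 1) :
    (n:ℝ)^n * p^m * (1-p)^r ≤ (m:ℝ)^m * (r:ℝ)^r := by
  have hq0 : (0:ℝ) ≤ 1 - p := by linarith
  have hmpos : (0:ℝ) < m := by exact_mod_cast hm1
  have hrpos : (0:ℝ) < r := by exact_mod_cast hr1
  have hn1 : 1 ≤ n := by omega
  have hnpos : (0:ℝ) < n := by exact_mod_cast hn1
  set x := (n:ℝ) * p / m with hxdef
  set y := (n:ℝ) * (1-p) / r with hydef
  have hx : 0 ≤ x := by positivity
  have hy : 0 ≤ y := by positivity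
  have ha : (0:ℝ) ≤ (m:ℝ)/n := by positivity
  have hb : (0:ℝ) ≤ (r:ℝ)/n := by positivity
  have hab : (m:ℝ)/n + (r:ℝ)/n = 1 := by
    field_simp
    exact_mod_cast hmr
  have key := Real.geom_mean_le_arith_mean2_weighted ha hb hx hy hab
  have harith : (m:ℝ)/n * x + (r:ℝ)/n * y = 1 := by
    rw [hxdef, hydef]; field_simp; ring
  rw [harith] at key
  have hxa : (0:ℝ) ≤ x ^ ((m:ℝ)/n) * y ^ ((r:ℝ)/n) := by positivity
  have key2 : (x ^ ((m:ℝ)/n) * y ^ ((r:ℝ)/n)) ^ n ≤ 1 := pow_le_one₀ hxa key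
  have hxn : (x ^ ((m:ℝ)/n)) ^ n = x ^ m := by
    rw [← Real.rpow_natCast (x ^ ((m:ℝ)/n)) n, ← Real.rpow_mul hx,
      div_mul_cancel₀ _ (ne_of_gt hnpos), Real.rpow_natCast]
  have hyn : (y ^ ((r:ℝ)/n)) ^ n = y ^ r := by
    rw [← Real.rpow_natCast (y ^ ((r:ℝ)/n)) n, ← Real.rpow_mul hy,
      div_mul_cancel₀ _ (ne_of_gt hnpos), Real.rpow_natCast]
  rw [mul_pow, hxn, hyn] at key2
  have hxm : x ^ m = ((n:ℝ)*p)^m / (m:ℝ)^m := by rw [hxdef, div_pow]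
  have hyr : y ^ r = ((n:ℝ)*(1-p))^r / (r:ℝ)^r := by rw [hydef, div_pow]
  rw [hxm, hyr, _root_.div_mul_div_comm, div_le_one (by positivity)] at key2
  calc (n:ℝ)^n * p^m * (1-p)^r = ((n:ℝ)*p)^m * ((n:ℝ)*(1-p))^r := by
        rw [mul_pow, mul_pow, ← hmr, pow_add]; ring
    _ ≤ (m:ℝ)^m * (r:ℝ)^r := key2

lemma maxpmf {n m r : ℕ} {p : ℝ} (hm1 : 1 ≤ m) (hr1 : 1 ≤ r) (hmr : m + r = n)
    (hp0 : 0 ≤ p) (hp1 : p ≤ 1) :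
    bpmf n m p ≤ 2 * Real.sqrt n / (Real.sqrt m * Real.sqrt r) := by
  set E := Real.exp 1 with hEdef
  have hEpos : 0 < E := Real.exp_pos 1
  have hq0 : (0:ℝ) ≤ 1 - p := by linarith
  have hmpos : (0:ℝ) < m := by exact_mod_cast hm1
  have hrpos : (0:ℝ) < r := by exact_mod_cast hr1
  have hn1 : 1 ≤ n := by omega
  have hnpos : (0:ℝ) < n := by exact_mod_cast hn1
  have hrs : n - m = r := by omega
  have hchoose : (n.choose m : ℝ) * ((m ! : ℝ) * (r ! : ℝ)) = (n ! : ℝ) := by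
    have := Nat.choose_mul_factorial_mul_factorial (show m ≤ n by omega)
    rw [hrs] at this
    exact_mod_cast (by rw [← this]; ring)
  have hmf : (0:ℝ) < (m ! : ℝ) := by exact_mod_cast Nat.factorial_pos m
  have hrf : (0:ℝ) < (r ! : ℝ) := by exact_mod_cast Nat.factorial_pos r
  have hlo_m := fact_lo hm1
  have hlo_r := fact_lo hr1
  have hhi := fact_hi hn1
  have hdm : (0:ℝ) < Real.sqrt (2*m) * ((m:ℝ)/E)^m := by positivity
  have hdr : (0:ℝ) < Real.sqrt (2*r) * ((r:ℝ)/E)^r := by positivity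
  have hcb : (n.choose m : ℝ) ≤
      ((E / Real.sqrt 2) * (Real.sqrt (2*n) * ((n:ℝ)/E)^n)) /
        ((Real.sqrt (2*m) * ((m:ℝ)/E)^m) * (Real.sqrt (2*r) * ((r:ℝ)/E)^r)) := by
    have h1 : (n.choose m : ℝ) = (n ! : ℝ) / ((m ! : ℝ) * (r ! : ℝ)) := by
      field_simp [← hchoose]
      rw [← hchoose]; ring
    rw [h1]
    apply div_le_div₀ (by positivity) hhi (by positivity)
    exact mul_le_mul hlo_m hlo_r hdr.le hmf.le
  have hid : ((E / Real.sqrt 2) * (Real.sqrt (2*n) * ((n:ℝ)/E)^n)) /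
        ((Real.sqrt (2*m) * ((m:ℝ)/E)^m) * (Real.sqrt (2*r) * ((r:ℝ)/E)^r))
      = (E/2) * (Real.sqrt n/(Real.sqrt m * Real.sqrt r)) * ((n:ℝ)^n/((m:ℝ)^m*(r:ℝ)^r)) := by
    have h2n : Real.sqrt (2*(n:ℝ)) = Real.sqrt 2 * Real.sqrt n := Real.sqrt_mul (by norm_num) _
    have h2m : Real.sqrt (2*(m:ℝ)) = Real.sqrt 2 * Real.sqrt m := Real.sqrt_mul (by norm_num) _
    have h2r : Real.sqrt (2*(r:ℝ)) = Real.sqrt 2 * Real.sqrt r := Real.sqrt_mul (by norm_num) _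
    have hEn : E^n = E^m * E^r := by rw [← pow_add, hmr]
    have hs2 : (0:ℝ) < Real.sqrt 2 := by positivity
    have hsm : (0:ℝ) < Real.sqrt m := Real.sqrt_pos.2 hmpos
    have hsr : (0:ℝ) < Real.sqrt r := Real.sqrt_pos.2 hrpos
    rw [div_pow, div_pow, div_pow, h2n, h2m, h2r, hEn]
    have h22 : Real.sqrt 2 * Real.sqrt 2 = 2 := Real.mul_self_sqrt (by norm_num)
    field_simp
    ring_nf
    rw [Real.sq_sqrt (by norm_num : (0:ℝ) ≤ 2)]
  rw [hid] at hcb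
  have hb : bpmf n m p = (n.choose m : ℝ) * (p^m * (1-p)^r) := by
    rw [bpmf, hrs]; ring
  have hstep : bpmf n m p ≤
      (E/2) * (Real.sqrt n/(Real.sqrt m * Real.sqrt r)) * ((n:ℝ)^n/((m:ℝ)^m*(r:ℝ)^r)) * (p^m * (1-p)^r) := by
    rw [hb]
    exact mul_le_mul_of_nonneg_right hcb (by positivity)
  have hfrac : ((n:ℝ)^n/((m:ℝ)^m*(r:ℝ)^r)) * (p^m * (1-p)^r) ≤ 1 := by
    rw [div_mul_eq_mul_div, div_le_one (by positivity)]
    calc (n:ℝ)^n * (p^m * (1-p)^r) = (n:ℝ)^n * p^m * (1-p)^r := by ring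
      _ ≤ (m:ℝ)^m * (r:ℝ)^r := amgm hm1 hr1 hmr hp0 hp1
  have hsq : 0 ≤ Real.sqrt n/(Real.sqrt m * Real.sqrt r) := by positivity
  have hE4 : E ≤ 4 := by
    have := Real.exp_one_lt_d9
    linarith
  calc bpmf n m p ≤ (E/2) * (Real.sqrt n/(Real.sqrt m * Real.sqrt r)) *
        (((n:ℝ)^n/((m:ℝ)^m*(r:ℝ)^r)) * (p^m * (1-p)^r)) := by
          linarith [hstep, mul_assoc ((E/2) * (Real.sqrt n/(Real.sqrt m * Real.sqrt r)))
            ((n:ℝ)^n/((m:ℝ)^m*(r:ℝ)^r)) (p^m * (1-p)^r)]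
    _ ≤ (E/2) * (Real.sqrt n/(Real.sqrt m * Real.sqrt r)) * 1 :=
        mul_le_mul_of_nonneg_left hfrac (by positivity)
    _ ≤ 2 * Real.sqrt n / (Real.sqrt m * Real.sqrt r) := by
        rw [mul_one, mul_div_assoc]
        exact mul_le_mul_of_nonneg_right (by linarith) hsq

lemma binom_apply (n : ℕ) (p : ℝ) (hp0 : 0 ≤ p) (hp1 : p ≤ 1) {A : Set ℝ} (hA : MeasurableSet A) :
    ((binom n p) A).toReal = ∑ k ∈ Finset.range (n+1), bpmf n k p * A.indicator (fun _ => (1:ℝ)) (k:ℝ) := by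
  rw [binom, Measure.finset_sum_apply]
  rw [ENNReal.toReal_sum]
  · refine Finset.sum_congr rfl fun k hk => ?_
    rw [Measure.smul_apply, Measure.dirac_apply' _ hA, smul_eq_mul]
    rw [ENNReal.toReal_mul, ENNReal.toReal_ofReal (by
      have h1 : (0:ℝ) ≤ 1 - p := by linarith
      exact mul_nonneg (mul_nonneg (Nat.cast_nonneg _) (pow_nonneg hp0 _)) (pow_nonneg h1 _))]
    congr 1
    by_cases h : (k:ℝ) ∈ A
    · simp [Set.indicator_of_mem h]
    · simp [Set.indicator_of_notMem h]
  · intro k hk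
    rw [Measure.smul_apply, smul_eq_mul]
    exact ENNReal.mul_ne_top ENNReal.ofReal_ne_top
      (by simp [Measure.dirac_apply' _ hA]; by_cases h : (k:ℝ) ∈ A <;> simp [h])

lemma tv_bound (n : ℕ) {p : ℝ} (hp0 : 0 < p) (hp1 : p < 1) {A : Set ℝ} (hA : MeasurableSet A) :
    |((binom n p) A).toReal - ((binom (n+1) p) A).toReal|
      ≤ 2 * p * bpmf n (Nat.floor (((n:ℝ)+1) * p)) p := by
  classical
  set m0 := Nat.floor (((n:ℝ)+1) * p) with hm0
  set f : ℕ → ℝ := fun j => if j = 0 then (0:ℝ) else bpmf n (j-1) p with hf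
  have hq : 0 < 1 - p := by linarith
  have hm0n : m0 ≤ n := by
    have : m0 < n + 1 := by
      rw [hm0, Nat.floor_lt (by positivity)]
      push_cast
      nlinarith
    omega
  have hFA := binom_apply n p hp0.le hp1.le hA
  have hGA := binom_apply (n+1) p hp0.le hp1.le hA
  have hFA2 : ((binom n p) A).toReal
      = ∑ k ∈ Finset.range (n+2), bpmf n k p * A.indicator (fun _ => (1:ℝ)) (k:ℝ) := by
    rw [show n + 2 = (n+1) + 1 by rfl, Finset.sum_range_succ, bpmf_top, hFA]
    simp
  have hdiff : ((binom n p) A).toReal - ((binom (n+1) p) A).toReal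
      = ∑ k ∈ Finset.range (n+2), (p * (f (k+1) - f k)) * A.indicator (fun _ => (1:ℝ)) (k:ℝ) := by
    rw [hFA2, hGA, ← Finset.sum_sub_distrib]
    refine Finset.sum_congr rfl fun k hk => ?_
    have hk' : k < n+2 := Finset.mem_range.1 hk
    have hb : bpmf n k p - bpmf (n+1) k p = p * (f (k+1) - f k) := by
      match k with
      | 0 =>
        simp only [hf, if_pos rfl, if_neg (Nat.one_ne_zero)]
        rw [bpmf_pascal0]
        ring
      | Nat.succ j =>
        have hj : j ≤ n := by omega
        rw [bpmf_pascal hj]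
        simp only [hf, if_neg (Nat.succ_ne_zero j), if_neg (Nat.succ_ne_zero (j+1)),
          Nat.succ_sub_one]
        ring
    rw [← hb]; ring
  rw [hdiff]
  have habs : ∀ k ∈ Finset.range (n+2),
      |(p * (f (k+1) - f k)) * A.indicator (fun _ => (1:ℝ)) (k:ℝ)| ≤ p * |f (k+1) - f k| := by
    intro k hk
    rw [abs_mul, abs_mul, abs_of_pos hp0]
    have hind : |A.indicator (fun _ => (1:ℝ)) (k:ℝ)| ≤ 1 := by
      by_cases h : (k:ℝ) ∈ A <;> simp [h]
    exact mul_le_of_le_one_right (mul_nonneg hp0.le (abs_nonneg _)) hind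
  have hup : ∀ k < m0 + 1, f k ≤ f (k+1) := by
    intro k hk
    match k with
    | 0 =>
      simp only [hf, if_pos rfl, if_neg Nat.one_ne_zero]
      exact bpmf_nonneg hp0.le hp1.le
    | Nat.succ j =>
      have hj1 : j + 1 ≤ m0 := by omega
      simp only [hf, if_neg (Nat.succ_ne_zero j), if_neg (Nat.succ_ne_zero (j+1)),
        Nat.succ_sub_one]
      refine bpmf_mono_up hp0 hp1 (by omega) ?_
      have := (Nat.le_floor_iff (by positivity : (0:ℝ) ≤ ((n:ℝ)+1) * p)).1 (hm0 ▸ hj1)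
      push_cast at this
      linarith
  have hdown : ∀ k, m0 + 1 ≤ k → k < n + 2 → f (k+1) ≤ f k := by
    intro k hk1 hk2
    match k with
    | 0 => omega
    | Nat.succ j =>
      have hj : m0 ≤ j := by omega
      simp only [hf, if_neg (Nat.succ_ne_zero j), if_neg (Nat.succ_ne_zero (j+1)),
        Nat.succ_sub_one]
      refine bpmf_mono_down hp0 hp1 ?_
      have h1 : ((n:ℝ)+1) * p < m0 + 1 := Nat.lt_floor_add_one _
      have h2 : (m0:ℝ) ≤ (j:ℝ) := by exact_mod_cast hj
      linarith
  calc |∑ k ∈ Finset.range (n+2), (p * (f (k+1) - f k)) * A.indicator (fun _ => (1:ℝ)) (k:ℝ)|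
      ≤ ∑ k ∈ Finset.range (n+2), |(p * (f (k+1) - f k)) * A.indicator (fun _ => (1:ℝ)) (k:ℝ)| :=
        Finset.abs_sum_le_sum_abs _ _
    _ ≤ ∑ k ∈ Finset.range (n+2), p * |f (k+1) - f k| := Finset.sum_le_sum habs
    _ = p * ∑ k ∈ Finset.range (n+2), |f (k+1) - f k| := by rw [Finset.mul_sum]
    _ = p * (2 * f (m0+1) - f 0 - f (n+2)) := by
        rw [tele f (n+2) (m0+1) (by omega) hup hdown]
    _ = 2 * p * bpmf n m0 p := by
        simp only [hf, if_pos rfl, if_neg (Nat.succ_ne_zero m0), if_neg (Nat.succ_ne_zero (n+1)),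
          Nat.succ_sub_one]
        rw [bpmf_top]
        ring

/-- For 0 < p < 1 there is c(p) with ρ_TV(B_{n,p}, B_{n+1,p}) ≤ c(p)/√n for all n ≥ 1. -/
theorem statement4 (p : ℝ) (hp0 : 0 < p) (hp1 : p < 1) :
    ∃ c : ℝ, ∀ n : ℕ, 0 < n → rhoTV1 (binom n p) (binom (n + 1) p) ≤ c / Real.sqrt n := by
  have hq : 0 < 1 - p := by linarith
  set N : ℕ := ⌈2/p⌉₊ + ⌈2/(1-p)⌉₊ + 1 with hN
  set c : ℝ := max (8 / Real.sqrt (p*(1-p))) (2 * Real.sqrt N) with hc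
  refine ⟨c, fun n hn => ?_⟩
  set m0 := Nat.floor (((n:ℝ)+1) * p) with hm0
  have hnn : (0:ℝ) < n := by exact_mod_cast hn
  have hsn : (0:ℝ) < Real.sqrt n := Real.sqrt_pos.2 hnn
  have hm0n : m0 ≤ n := by
    have : m0 < n + 1 := by
      rw [hm0, Nat.floor_lt (by positivity)]
      push_cast
      nlinarith
    omega
  haveI : Nonempty {A : Set ℝ // MeasurableSet A} := ⟨⟨∅, MeasurableSet.empty⟩⟩
  have hTV : rhoTV1 (binom n p) (binom (n+1) p) ≤ 2 * p * bpmf n m0 p := by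
    refine ciSup_le fun A => ?_
    exact tv_bound n hp0 hp1 A.2
  have hbnn : 0 ≤ bpmf n m0 p := bpmf_nonneg hp0.le hp1.le
  rcases lt_or_ge n N with hcase | hcase
  · have hb1 : bpmf n m0 p ≤ 1 := bpmf_le_one hp0.le hp1.le hm0n
    have h2 : rhoTV1 (binom n p) (binom (n+1) p) ≤ 2 := by nlinarith
    have h3 : 2 ≤ c / Real.sqrt n := by
      rw [le_div_iff₀ hsn]
      have h4 : Real.sqrt n ≤ Real.sqrt N := Real.sqrt_le_sqrt (by exact_mod_cast hcase.le)
      calc 2 * Real.sqrt n ≤ 2 * Real.sqrt N := by linarith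
        _ ≤ c := le_max_right _ _
    linarith
  · have hNp : (⌈2/p⌉₊ : ℕ) ≤ n := by omega
    have hNq : (⌈2/(1-p)⌉₊ : ℕ) ≤ n := by omega
    have hnp : 2 ≤ (n:ℝ) * p := by
      have h2 : 2/p ≤ (n:ℝ) := le_trans (Nat.le_ceil _) (by exact_mod_cast hNp)
      rw [div_le_iff₀ hp0] at h2
      linarith
    have hnq : 2 ≤ (n:ℝ) * (1-p) := by
      have h2 : 2/(1-p) ≤ (n:ℝ) := le_trans (Nat.le_ceil _) (by exact_mod_cast hNq)
      rw [div_le_iff₀ hq] at h2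
      linarith
    have hfl : ((n:ℝ)+1)*p - 1 < (m0:ℝ) := Nat.sub_one_lt_floor _
    have hfu : (m0:ℝ) ≤ ((n:ℝ)+1)*p := Nat.floor_le (by positivity)
    have hm0lo : (n:ℝ)*p/2 ≤ (m0:ℝ) := by nlinarith
    have hm01 : 1 ≤ m0 := by
      have : (1:ℝ) ≤ (m0:ℝ) := by nlinarith
      exact_mod_cast this
    have hm0ltn : m0 < n := by
      have : (m0:ℝ) < (n:ℝ) := by nlinarith
      exact_mod_cast this
    set r := n - m0 with hr
    have hmr : m0 + r = n := by omega
    have hr1 : 1 ≤ r := by omega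
    have hrcast : (r:ℝ) = (n:ℝ) - (m0:ℝ) := by
      rw [hr, Nat.cast_sub hm0ltn.le]
    have hrlo : (n:ℝ)*(1-p)/2 ≤ (r:ℝ) := by
      rw [hrcast]; nlinarith
    have hmax := maxpmf hm01 hr1 hmr hp0.le hp1.le
    have hs1 : Real.sqrt ((n:ℝ)*p/2) ≤ Real.sqrt m0 := Real.sqrt_le_sqrt hm0lo
    have hs2 : Real.sqrt ((n:ℝ)*(1-p)/2) ≤ Real.sqrt r := Real.sqrt_le_sqrt hrlo
    have hprod : (n:ℝ)/2 * Real.sqrt (p*(1-p)) ≤ Real.sqrt m0 * Real.sqrt r := by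
      have h1 : Real.sqrt ((n:ℝ)*p/2) * Real.sqrt ((n:ℝ)*(1-p)/2)
          = (n:ℝ)/2 * Real.sqrt (p*(1-p)) := by
        rw [← Real.sqrt_mul (by positivity),
          show (n:ℝ)*p/2 * ((n:ℝ)*(1-p)/2) = ((n:ℝ)/2)^2 * (p*(1-p)) by ring,
          Real.sqrt_mul (by positivity), Real.sqrt_sq (by positivity)]
      rw [← h1]
      exact mul_le_mul hs1 hs2 (Real.sqrt_nonneg _) (Real.sqrt_nonneg _)
    have hpq : 0 < Real.sqrt (p*(1-p)) := Real.sqrt_pos.2 (by positivity)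
    have hden : (0:ℝ) < (n:ℝ)/2 * Real.sqrt (p*(1-p)) := by positivity
    have hbound : bpmf n m0 p ≤ 4 / (Real.sqrt (p*(1-p)) * Real.sqrt n) := by
      have hstep1 : bpmf n m0 p ≤ 2 * Real.sqrt n / ((n:ℝ)/2 * Real.sqrt (p*(1-p))) := by
        refine le_trans hmax ?_
        exact div_le_div_of_nonneg_left (by positivity) hden hprod
      have heq : 2 * Real.sqrt n / ((n:ℝ)/2 * Real.sqrt (p*(1-p)))
          = 4 / (Real.sqrt (p*(1-p)) * Real.sqrt n) := by
        have hnsq : Real.sqrt n * Real.sqrt n = (n:ℝ) := Real.mul_self_sqrt hnn.le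
        rw [div_eq_div_iff hden.ne' (by positivity : (Real.sqrt (p*(1-p)) * Real.sqrt n) ≠ 0)]
        linear_combination (2 * Real.sqrt (p*(1-p))) * hnsq
      rw [heq] at hstep1
      exact hstep1
    have h8 : 2 * p * bpmf n m0 p ≤ (8 / Real.sqrt (p*(1-p))) / Real.sqrt n := by
      have h1 : 2 * p * bpmf n m0 p ≤ 2 * (4 / (Real.sqrt (p*(1-p)) * Real.sqrt n)) := by
        nlinarith [hbound, mul_pos hpq hsn]
      have h2 : 2 * (4 / (Real.sqrt (p*(1-p)) * Real.sqrt n))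
          = (8 / Real.sqrt (p*(1-p))) / Real.sqrt n := by
        field_simp
        ring
      linarith [h2 ▸ h1]
    have h9 : (8 / Real.sqrt (p*(1-p))) / Real.sqrt n ≤ c / Real.sqrt n := by
      gcongr
      exact le_max_left _ _
    exact le_trans hTV (le_trans h8 h9)
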